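/- (Elimination) Let G = (V,E) be a finite simple graph, let O be an orientation of G, let C and C' be (edge sets of) O-directed cycles, and let O' be the orientation obtained from O by reversing the direction of every edge of C'. Then the symmetric difference C △ C' is a union of O'-directed cycles, and in particular every edge of C lies in an O'-directed cycle whose edge set is contained in C ∪ C'. -/

import Mathlib

/-- An orientation of a simple graph: a choice of direction for each edge. -/
structure GraphOrientation {V : Type*} (G : SimpleGraph V) where
  dir : V → V → Prop
  adj_of_dir : ∀ u v, dir u v → G.Adj u v
  dir_iff_not : ∀ u v, G.Adj u v → (dir u v ↔ ¬ dir v u)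

namespace GraphOrientation

variable {V : Type*} {G : SimpleGraph V}

/-- The outdegree of a vertex: the number of edges directed away from it. -/
noncomputable def outDegree (O : GraphOrientation G) (v : V) : ℕ :=
  {u | O.dir v u}.ncard

/-- `v` is reachable from `u` by a directed path. -/
def Reaches (O : GraphOrientation G) : V → V → Prop :=
  Relation.ReflTransGen O.dir

/-- `C` is the edge set of a directed cycle of the orientation. -/
def IsDirCycle (O : GraphOrientation G) (C : Set (Sym2 V)) : Prop :=
  ∃ (v : V) (w : G.Walk v v), w.IsCycle ∧
    (∀ d ∈ w.darts, O.dir d.toProd.1 d.toProd.2) ∧ C = {e | e ∈ w.edges}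

/-- The orientation is strongly connected. -/
def IsStronglyConnected (O : GraphOrientation G) : Prop := ∀ u v, O.Reaches u v

/-- Every vertex is reachable from `v0`. -/
def IsConnectedFrom (O : GraphOrientation G) (v0 : V) : Prop := ∀ v, O.Reaches v0 v

/-- The set of edges on which two orientations differ. -/
def diffSet (O O' : GraphOrientation G) : Set (Sym2 V) :=
  {e | ∃ a b, e = s(a, b) ∧ O.dir a b ∧ O'.dir b a}

/-- `O'` is obtained from `O` by reversing exactly the edges of `A`. -/
def IsFlipOn (O O' : GraphOrientation G) (A : Set (Sym2 V)) : Prop :=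
  (∀ u v, s(u, v) ∈ A → (O'.dir u v ↔ O.dir v u)) ∧
    (∀ u v, s(u, v) ∉ A → (O'.dir u v ↔ O.dir u v))

/-- One cycle-flip step. -/
def CycleFlip (O O' : GraphOrientation G) : Prop :=
  ∃ C, O.IsDirCycle C ∧ O.IsFlipOn O' C

end GraphOrientation

/-- The cut defined by a vertex subset `U`: edges with exactly one endpoint in `U`. -/
def SimpleGraph.cutSet {V : Type*} (G : SimpleGraph V) (U : Set V) : Set (Sym2 V) :=
  {e | ∃ a b, e = s(a, b) ∧ G.Adj a b ∧ a ∈ U ∧ b ∉ U}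

/-- A cocycle: a minimal nonempty cut. -/
def SimpleGraph.IsCocycle {V : Type*} (G : SimpleGraph V) (D : Set (Sym2 V)) : Prop :=
  D.Nonempty ∧ (∃ U : Set V, D = G.cutSet U) ∧
    ∀ D' : Set (Sym2 V), D'.Nonempty → (∃ U : Set V, D' = G.cutSet U) → D' ⊆ D → D' = D

/-- A directed cocycle: a cocycle all of whose edges are directed toward the same side. -/
def GraphOrientation.IsDirCocycle {V : Type*} {G : SimpleGraph V}
    (O : GraphOrientation G) (D : Set (Sym2 V)) : Prop :=
  G.IsCocycle D ∧ ∃ U : Set V, D = G.cutSet U ∧ ∀ a b, O.dir a b → s(a, b) ∈ D → b ∈ U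

/-- The excess of a subset of vertices with respect to `δ : V → ℕ`. -/
noncomputable def SimpleGraph.excess {V : Type*} (G : SimpleGraph V) (δ : V → ℕ)
    (U : Finset V) : ℤ :=
  (∑ u ∈ U, (δ u : ℤ)) - ({e | e ∈ G.edgeSet ∧ ∀ x ∈ e, x ∈ U} : Set (Sym2 V)).ncard

/-- `C` is the edge set of a cycle of `G`. -/
def SimpleGraph.IsCycleEdgeSet {V : Type*} (G : SimpleGraph V) (C : Set (Sym2 V)) : Prop :=
  ∃ (v : V) (w : G.Walk v v), w.IsCycle ∧ C = {e | e ∈ w.edges}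

/-- The number of connected components of the spanning subgraph `(V, S)`. -/
noncomputable def numComponents (V : Type*) (S : Set (Sym2 V)) : ℕ :=
  Nat.card (SimpleGraph.fromEdgeSet S).ConnectedComponent

section AuxForStatement8

open SimpleGraph

variable {V : Type*} {G : SimpleGraph V}

namespace GraphOrientation

lemma dir_asymm (O : GraphOrientation G) {a b : V} (h : O.dir a b) : ¬ O.dir b a :=
  (O.dir_iff_not a b (O.adj_of_dir a b h)).mp h

lemma dir_eq_of_sym2 (O : GraphOrientation G) {a b x y : V} (h1 : O.dir a b) (h2 : O.dir x y)
    (h : s(a, b) = s(x, y)) : (a, b) = (x, y) := by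
  rw [Sym2.eq_iff] at h
  rcases h with ⟨rfl, rfl⟩ | ⟨rfl, rfl⟩
  · rfl
  · exact absurd h2 (O.dir_asymm h1)

/-- Arcs of a walk. -/
def warcs {u v : V} (w : G.Walk u v) : Set (V × V) := {p | ∃ d ∈ w.darts, d.toProd = p}

/-- Balanced arc set: in-degree equals out-degree everywhere. -/
def Bal (A : Set (V × V)) : Prop :=
  ∀ v, {b | (v, b) ∈ A}.ncard = {a | (a, v) ∈ A}.ncard

lemma count_fst_darts_eq [DecidableEq V] {v : V} (q : G.Walk v v) (x : V) :
    (q.darts.map fun d => d.fst).count x = (q.darts.map fun d => d.snd).count x := by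
  rw [Walk.map_fst_darts, Walk.map_snd_darts]
  have h1 : q.support.dropLast ++ [q.support.getLast q.support_ne_nil] = q.support :=
    List.dropLast_append_getLast _
  have h2 : q.support.getLast q.support_ne_nil = v := q.getLast_support
  have h3 := congrArg (List.count x) h1
  rw [List.count_append, h2] at h3
  have h4 : List.count x q.support = List.count x [v] + List.count x q.support.tail := by
    conv_lhs => rw [q.support_eq_cons]
    rw [show v :: q.support.tail = [v] ++ q.support.tail from rfl, List.count_append]
  omega

lemma ncard_fiber_fst [DecidableEq V] (L : List (V × V)) (hL : L.Nodup) (x : V) :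
    {b | (x, b) ∈ L}.ncard = (L.map Prod.fst).count x := by
  have hset : {b | (x, b) ∈ L} = ↑(((L.filter fun p => p.1 == x).map Prod.snd).toFinset) := by
    ext b
    simp only [Set.mem_setOf_eq, Finset.coe_sort_coe, List.coe_toFinset, Set.mem_setOf_eq,
      List.mem_map, List.mem_filter, beq_iff_eq]
    constructor
    · intro h; exact ⟨(x, b), ⟨h, rfl⟩, rfl⟩
    · rintro ⟨⟨a, c⟩, ⟨hmem, ha⟩, rfl⟩
      subst ha; exact hmem
  rw [hset, Set.ncard_coe_finset]
  have hnd : ((L.filter fun p => p.1 == x).map Prod.snd).Nodup := by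
    refine List.Nodup.map_on ?_ (hL.filter _)
    intro p hp q hq hpq
    have hpx : p.1 = x := by simpa using (List.mem_filter.mp hp).2
    have hqx : q.1 = x := by simpa using (List.mem_filter.mp hq).2
    exact Prod.ext (hpx.trans hqx.symm) hpq
  rw [List.toFinset_card_of_nodup hnd, List.length_map]
  rw [← List.countP_eq_length_filter]
  rw [List.count, List.countP_map]
  rfl


lemma warcs_bal {v : V} (q : G.Walk v v) (hnd : q.darts.Nodup) : Bal (warcs q) := by
  classical
  intro x
  set L : List (V × V) := q.darts.map (fun d => d.toProd) with hLdef
  have hL : L.Nodup := hnd.map SimpleGraph.Dart.toProd_injective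
  have hmem : ∀ p : V × V, p ∈ warcs q ↔ p ∈ L := by
    intro p
    simp [warcs, hLdef, List.mem_map]
  have hout : {b | (x, b) ∈ warcs q} = {b | (x, b) ∈ L} := by
    ext b; exact hmem _
  have hin : {a | (a, x) ∈ warcs q} = {a | (x, a) ∈ L.map Prod.swap} := by
    ext a
    simp only [Set.mem_setOf_eq]
    rw [hmem]
    constructor
    · intro h; exact List.mem_map.mpr ⟨(a, x), h, rfl⟩
    · rintro h
      obtain ⟨p, hp, hpe⟩ := List.mem_map.mp h
      have : p = (a, x) := by
        have := congrArg Prod.swap hpe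
        simpa using this
      rwa [this] at hp
  rw [hout, hin, ncard_fiber_fst L hL x,
    ncard_fiber_fst (L.map Prod.swap) (hL.map Prod.swap_injective) x, hLdef]
  simp only [List.map_map]
  exact count_fst_darts_eq q x

lemma bal_diff [Finite V] {A B : Set (V × V)} (hBA : B ⊆ A) (hA : Bal A) (hB : Bal B) :
    Bal (A \ B) := by
  intro v
  have h1 : {b | (v, b) ∈ A \ B} = {b | (v, b) ∈ A} \ {b | (v, b) ∈ B} := by
    ext b; simp [Set.mem_diff]
  have h2 : {a | (a, v) ∈ A \ B} = {a | (a, v) ∈ A} \ {a | (a, v) ∈ B} := by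
    ext a; simp [Set.mem_diff]
  have hsub1 : {b | (v, b) ∈ B} ⊆ {b | (v, b) ∈ A} := fun b hb => hBA hb
  have hsub2 : {a | (a, v) ∈ B} ⊆ {a | (a, v) ∈ A} := fun a ha => hBA ha
  rw [h1, h2, Set.ncard_diff hsub1 (Set.toFinite _), Set.ncard_diff hsub2 (Set.toFinite _),
    hA v, hB v]

lemma bal_union [Finite V] {A B : Set (V × V)} (hd : Disjoint A B) (hA : Bal A) (hB : Bal B) :
    Bal (A ∪ B) := by
  intro v
  have hd1 : Disjoint {b | (v, b) ∈ A} {b | (v, b) ∈ B} := by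
    rw [Set.disjoint_left]
    intro b hbA hbB
    exact (Set.disjoint_left.mp hd) hbA hbB
  have hd2 : Disjoint {a | (a, v) ∈ A} {a | (a, v) ∈ B} := by
    rw [Set.disjoint_left]
    intro a haA haB
    exact (Set.disjoint_left.mp hd) haA haB
  have h1 : {b | (v, b) ∈ A ∪ B} = {b | (v, b) ∈ A} ∪ {b | (v, b) ∈ B} := by
    ext b; simp [Set.mem_union]
  have h2 : {a | (a, v) ∈ A ∪ B} = {a | (a, v) ∈ A} ∪ {a | (a, v) ∈ B} := by
    ext a; simp [Set.mem_union]
  rw [h1, h2, Set.ncard_union_eq hd1 (Set.toFinite _) (Set.toFinite _),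
    Set.ncard_union_eq hd2 (Set.toFinite _) (Set.toFinite _), hA v, hB v]

lemma bal_swap {A : Set (V × V)} (hA : Bal A) : Bal (Prod.swap '' A) := by
  intro v
  have h1 : {b | (v, b) ∈ Prod.swap '' A} = {b | (b, v) ∈ A} := by
    ext b
    constructor
    · rintro ⟨p, hp, hpe⟩
      have : p = (b, v) := by have := congrArg Prod.swap hpe; simpa using this
      rwa [this] at hp
    · intro h; exact ⟨(b, v), h, rfl⟩
  have h2 : {a | (a, v) ∈ Prod.swap '' A} = {a | (v, a) ∈ A} := by
    ext a
    constructor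
    · rintro ⟨p, hp, hpe⟩
      have : p = (v, a) := by have := congrArg Prod.swap hpe; simpa using this
      rwa [this] at hp
    · intro h; exact ⟨(v, a), h, rfl⟩
  rw [h1, h2]
  exact (hA v).symm


open SimpleGraph in
lemma exists_cycle_of_closedWalk (O' : GraphOrientation G) (P : G.Dart → Prop)
    (hdir : ∀ d, P d → O'.dir d.fst d.snd) :
    ∀ n, ∀ {u : V} (q : G.Walk u u), q.length = n → 0 < n → (∀ d ∈ q.darts, P d) →
      ∃ (x : V) (c : G.Walk x x), c.IsCycle ∧ ∀ d ∈ c.darts, P d := by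
  intro n
  induction n using Nat.strong_induction_on with
  | _ n IH =>
  intro u q hlen hpos hP
  classical
  by_cases hnd : q.support.tail.Nodup
  · refine ⟨u, q, ?_, hP⟩
    rw [Walk.isCycle_def]
    refine ⟨⟨?_⟩, ?_, hnd⟩
    · -- edges nodup
      have hdarts : q.darts.Nodup := by
        have h := q.map_snd_darts
        have : (q.darts.map fun d => d.snd).Nodup := by rw [h]; exact hnd
        exact this.of_map _
      refine List.Nodup.map_on ?_ hdarts
      intro d1 h1 d2 h2 hedge
      have hdir1 := hdir d1 (hP d1 h1)
      have hdir2 := hdir d2 (hP d2 h2)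
      have : (d1.fst, d1.snd) = (d2.fst, d2.snd) := O'.dir_eq_of_sym2 hdir1 hdir2 hedge
      exact SimpleGraph.Dart.ext _ _ this
    · intro h
      rw [h] at hlen
      simp at hlen
      omega
  · obtain ⟨x, hx⟩ : ∃ x, 2 ≤ q.support.tail.count x := by
      by_contra hno
      push_neg at hno
      exact hnd (List.nodup_iff_count_le_one.mpr fun a => by have := hno a; omega)
    have hxs : x ∈ q.support := by
      rw [q.support_eq_cons]
      exact List.mem_cons_of_mem _ (List.count_pos_iff.mp (by omega))
    have hrd : ∀ d ∈ (q.rotate x hxs).darts, P d := fun d hd =>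
      hP d ((q.rotate_darts x hxs).perm.mem_iff.mp hd)
    have hrlen : (q.rotate x hxs).length = n := by
      have h1 := (q.rotate_darts x hxs).perm.length_eq
      rw [Walk.length_darts, Walk.length_darts] at h1
      omega
    have hcount : 2 ≤ (q.rotate x hxs).support.tail.count x := by
      rw [(q.support_rotate x hxs).perm.count_eq]
      exact hx
    obtain ⟨y, hadj, r', hr'⟩ := Walk.not_nil_iff.mp
      (Walk.not_nil_iff_lt_length.mpr (by omega : 0 < (q.rotate x hxs).length))
    have hrtail : (q.rotate x hxs).support.tail = r'.support := by
      rw [hr']; simp [Walk.support_cons]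
    have hxr' : x ∈ r'.support := by
      rw [← hrtail]
      exact List.count_pos_iff.mp (by omega)
    have hspec := r'.take_spec hxr'
    have hcnt1 : (r'.takeUntil x hxr').support.count x = 1 :=
      r'.count_support_takeUntil_eq_one hxr'
    have hsupp : r'.support = (r'.takeUntil x hxr').support ++ (r'.dropUntil x hxr').support.tail := by
      conv_lhs => rw [← hspec]
      rw [Walk.support_append]
    have hdlen : 0 < (r'.dropUntil x hxr').length := by
      have h2 : 2 ≤ r'.support.count x := by rw [← hrtail]; exact hcount
      rw [hsupp, List.count_append, hcnt1] at h2
      have hmem : x ∈ (r'.dropUntil x hxr').support.tail := List.count_pos_iff.mp (by omega)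
      have h3 : 0 < (r'.dropUntil x hxr').support.tail.length := List.length_pos_iff.mpr
        (List.ne_nil_of_mem hmem)
      have h4 := (r'.dropUntil x hxr').length_support
      have h5 : (r'.dropUntil x hxr').support.tail.length =
          (r'.dropUntil x hxr').support.length - 1 := by simp [List.length_tail]
      omega
    have hlen' : r'.length = (r'.takeUntil x hxr').length + (r'.dropUntil x hxr').length := by
      conv_lhs => rw [← hspec]
      rw [Walk.length_append]
    have hrlen2 : (q.rotate x hxs).length = r'.length + 1 := by rw [hr']; simp
    set c1 : G.Walk x x := Walk.cons hadj (r'.takeUntil x hxr') with hc1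
    have hc1len : c1.length = (r'.takeUntil x hxr').length + 1 := by simp [hc1]
    have hc1P : ∀ d ∈ c1.darts, P d := by
      intro d hd
      rw [hc1, Walk.darts_cons] at hd
      rcases List.mem_cons.mp hd with rfl | hd'
      · apply hrd
        rw [hr', Walk.darts_cons]
        exact List.mem_cons_self
      · apply hrd
        rw [hr', Walk.darts_cons]
        refine List.mem_cons_of_mem _ ?_
        have hda := congrArg SimpleGraph.Walk.darts hspec
        rw [Walk.darts_append] at hda
        rw [← hda]
        exact List.mem_append_left _ hd'
    exact IH c1.length (by omega) c1 rfl (by omega) hc1P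

lemma exists_closedWalk [Finite V] (O' : GraphOrientation G) {A : Set (V × V)}
    (hdir : ∀ p ∈ A, O'.dir p.1 p.2) (hbal : Bal A) (hne : A.Nonempty) :
    ∃ (u : V) (q : G.Walk u u), 0 < q.length ∧ ∀ d ∈ q.darts, d.toProd ∈ A := by
  classical
  have hnext : ∀ v, (∃ u, (u, v) ∈ A) → ∃ w, (v, w) ∈ A := by
    rintro v ⟨u, hu⟩
    have h1 : 0 < {a | (a, v) ∈ A}.ncard :=
      (Set.ncard_pos (Set.toFinite _)).mpr ⟨u, hu⟩
    have h2 : 0 < {b | (v, b) ∈ A}.ncard := by rw [hbal v]; exact h1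
    obtain ⟨b, hb⟩ := (Set.ncard_pos (Set.toFinite _)).mp h2
    exact ⟨b, hb⟩
  obtain ⟨⟨a, b⟩, hab⟩ := hne
  let g : ℕ → {v : V // ∃ u, (u, v) ∈ A} := fun n =>
    Nat.rec ⟨b, a, hab⟩
      (fun _ p => ⟨Classical.choose (hnext p.1 p.2), p.1, Classical.choose_spec (hnext p.1 p.2)⟩) n
  have hstep : ∀ n, ((g n).1, (g (n + 1)).1) ∈ A := fun n =>
    Classical.choose_spec (hnext (g n).1 (g n).2)
  set f : ℕ → V := fun n => (g n).1 with hf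
  have hwalk : ∀ n i, ∃ w : G.Walk (f i) (f (i + n)), w.length = n ∧
      ∀ d ∈ w.darts, d.toProd ∈ A := by
    intro n
    induction n with
    | zero => exact fun i => ⟨SimpleGraph.Walk.nil, rfl, by simp⟩
    | succ n IHn =>
      intro i
      obtain ⟨w, hl, hw⟩ := IHn (i + 1)
      have hadj : G.Adj (f i) (f (i + 1)) := O'.adj_of_dir _ _ (hdir _ (hstep i))
      have hcast : i + 1 + n = i + (n + 1) := by omega
      refine ⟨SimpleGraph.Walk.cons hadj (w.copy rfl (congrArg f hcast)), ?_, ?_⟩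
      · simp [hl]
      · intro d hd
        rw [SimpleGraph.Walk.darts_cons] at hd
        rcases List.mem_cons.mp hd with rfl | hd'
        · exact hstep i
        · rw [SimpleGraph.Walk.darts_copy] at hd'
          exact hw d hd'
  obtain ⟨i0, j0, hne', heq0⟩ := Finite.exists_ne_map_eq_of_infinite f
  obtain ⟨i, j, hij, heq⟩ : ∃ i j, i < j ∧ f i = f j := by
    rcases lt_or_gt_of_ne hne' with h | h
    · exact ⟨_, _, h, heq0⟩
    · exact ⟨_, _, h, heq0.symm⟩
  obtain ⟨w, hl, hw⟩ := hwalk (j - i) i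
  have hji : f (i + (j - i)) = f i := by rw [show i + (j - i) = j from by omega, ← heq]
  refine ⟨f i, w.copy rfl hji, ?_, ?_⟩
  · rw [SimpleGraph.Walk.length_copy, hl]; omega
  · intro d hd
    rw [SimpleGraph.Walk.darts_copy] at hd
    exact hw d hd


open SimpleGraph in
lemma decomp [Finite V] (O' : GraphOrientation G) :
    ∀ (n : ℕ) (A : Set (V × V)), A.ncard ≤ n → (∀ p ∈ A, O'.dir p.1 p.2) → Bal A →
      ∃ 𝒞 : Set (Set (Sym2 V)), (∀ D ∈ 𝒞, O'.IsDirCycle D) ∧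
        ⋃₀ 𝒞 = {e | ∃ p ∈ A, e = s(p.1, p.2)} := by
  intro n
  induction n with
  | zero =>
    intro A hle _ _
    have hA : A = ∅ := by
      rw [← Set.ncard_eq_zero (Set.toFinite A)]
      omega
    refine ⟨∅, by simp, ?_⟩
    rw [hA]
    simp
  | succ n IHn =>
    intro A hle hdir hbal
    rcases A.eq_empty_or_nonempty with rfl | hne
    · exact ⟨∅, by simp, by simp⟩
    obtain ⟨u, q, hq, hqA⟩ := exists_closedWalk O' hdir hbal hne
    obtain ⟨x, c, hcyc, hcA⟩ := exists_cycle_of_closedWalk O' (fun d => d.toProd ∈ A)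
      (fun d hd => hdir _ hd) q.length q rfl hq hqA
    set B : Set (V × V) := warcs c with hB
    have hBA : B ⊆ A := by rintro p ⟨d, hd, rfl⟩; exact hcA d hd
    have hcnd : c.darts.Nodup := by
      have hed : c.edges.Nodup := hcyc.isTrail.edges_nodup
      exact hed.of_map _
    have hBbal : Bal B := warcs_bal c hcnd
    have hBne : B.Nonempty := by
      have h3 := hcyc.three_le_length
      have hlen := c.length_darts
      have : c.darts ≠ [] := by
        intro h
        rw [h] at hlen
        simp at hlen
        omega
      obtain ⟨d, hd⟩ := List.exists_mem_of_ne_nil _ this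
      exact ⟨d.toProd, d, hd, rfl⟩
    have hA'le : (A \ B).ncard ≤ n := by
      rw [Set.ncard_diff hBA (Set.toFinite B)]
      have h1 : 0 < B.ncard := (Set.ncard_pos (Set.toFinite B)).mpr hBne
      omega
    obtain ⟨𝒞', h1, h2⟩ := IHn (A \ B) hA'le (fun p hp => hdir p hp.1)
      (bal_diff hBA hbal hBbal)
    refine ⟨insert {e | e ∈ c.edges} 𝒞', ?_, ?_⟩
    · rintro E hE
      rcases Set.mem_insert_iff.mp hE with rfl | hE'
      · exact ⟨x, c, hcyc, fun d hd => hdir _ (hcA d hd), rfl⟩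
      · exact h1 E hE'
    · rw [Set.sUnion_insert, h2]
      ext e
      simp only [Set.mem_union, Set.mem_setOf_eq]
      constructor
      · rintro (he | ⟨p, hp, rfl⟩)
        · obtain ⟨d, hd, hde⟩ := List.mem_map.mp he
          exact ⟨d.toProd, hcA d hd, by rw [← hde]; rfl⟩
        · exact ⟨p, hp.1, rfl⟩
      · rintro ⟨p, hp, rfl⟩
        by_cases hpB : p ∈ B
        · left
          obtain ⟨d, hd, rfl⟩ := hpB
          exact List.mem_map.mpr ⟨d, hd, rfl⟩
        · exact Or.inr ⟨p, ⟨hp, hpB⟩, rfl⟩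

end GraphOrientation

end AuxForStatement8

open GraphOrientation in
theorem statement8 {V : Type*} [Fintype V] (G : SimpleGraph V)
    (O O' : GraphOrientation G) (C C' : Set (Sym2 V))
    (hC : O.IsDirCycle C) (hC' : O.IsDirCycle C') (hflip : O.IsFlipOn O' C') :
    (∃ 𝒞 : Set (Set (Sym2 V)), (∀ D ∈ 𝒞, O'.IsDirCycle D) ∧ ⋃₀ 𝒞 = symmDiff C C') ∧
      ∀ e ∈ C, ∃ D : Set (Sym2 V), O'.IsDirCycle D ∧ e ∈ D ∧ D ⊆ C ∪ C' := by
  classical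
  obtain ⟨v, w, hw, hwdir, hCeq⟩ := hC
  obtain ⟨v', w', hw', hw'dir, hC'eq⟩ := hC'
  set Aw : Set (V × V) := warcs w with hAwdef
  set Aw' : Set (V × V) := warcs w' with hAw'def
  set U : Set (V × V) := Aw ∪ Prod.swap '' Aw' with hUdef
  set A : Set (V × V) := U \ (Prod.swap '' U) with hAdef
  have hAwO : ∀ p ∈ Aw, O.dir p.1 p.2 := by rintro p ⟨d, hd, rfl⟩; exact hwdir d hd
  have hAw'O : ∀ p ∈ Aw', O.dir p.1 p.2 := by rintro p ⟨d, hd, rfl⟩; exact hw'dir d hd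
  have hAwC : ∀ p ∈ Aw, s(p.1, p.2) ∈ C := by
    rintro p ⟨d, hd, rfl⟩
    simp only [hCeq, Set.mem_setOf_eq]
    exact List.mem_map.mpr ⟨d, hd, rfl⟩
  have hAw'C : ∀ p ∈ Aw', s(p.1, p.2) ∈ C' := by
    rintro p ⟨d, hd, rfl⟩
    simp only [hC'eq, Set.mem_setOf_eq]
    exact List.mem_map.mpr ⟨d, hd, rfl⟩
  have hCarc : ∀ e ∈ C, ∃ p ∈ Aw, e = s(p.1, p.2) := by
    intro e he
    rw [hCeq] at he
    obtain ⟨d, hd, hde⟩ := List.mem_map.mp he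
    exact ⟨d.toProd, ⟨d, hd, rfl⟩, by rw [← hde]; rfl⟩
  have hC'arc : ∀ e ∈ C', ∃ p ∈ Aw', e = s(p.1, p.2) := by
    intro e he
    rw [hC'eq] at he
    obtain ⟨d, hd, hde⟩ := List.mem_map.mp he
    exact ⟨d.toProd, ⟨d, hd, rfl⟩, by rw [← hde]; rfl⟩
  have huniq : ∀ p q : V × V, O.dir p.1 p.2 → O.dir q.1 q.2 →
      s(p.1, p.2) = s(q.1, q.2) → p = q := by
    intro p q h1 h2 h
    have h3 := O.dir_eq_of_sym2 h1 h2 h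
    calc p = (p.1, p.2) := rfl
    _ = (q.1, q.2) := h3
    _ = q := rfl
  have hswapU : ∀ p : V × V, p ∈ Prod.swap '' U ↔ p.swap ∈ U := by
    intro p
    constructor
    · rintro ⟨q, hq, rfl⟩; simpa using hq
    · intro h; exact ⟨p.swap, h, by simp⟩
  have hkey1 : ∀ p ∈ Aw, s(p.1, p.2) ∈ C' → p ∈ Prod.swap '' U := by
    intro p hp hmC'
    obtain ⟨q, hq, he⟩ := hC'arc _ hmC'
    have heq : p = q := huniq p q (hAwO p hp) (hAw'O q hq) he
    subst heq
    rw [hswapU]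
    exact Or.inr ⟨p, hq, rfl⟩
  have hkey2 : ∀ p ∈ Aw', s(p.1, p.2) ∈ C → Prod.swap p ∈ Prod.swap '' U := by
    intro p hp hmC
    obtain ⟨q, hq, he⟩ := hCarc _ hmC
    have heq : p = q := huniq p q (hAw'O p hp) (hAwO q hq) he
    subst heq
    rw [hswapU]
    simp only [Prod.swap_swap]
    exact Or.inl hq
  have hdirA : ∀ p ∈ A, O'.dir p.1 p.2 := by
    rintro p ⟨hpU, hps⟩
    rcases hpU with hpw | ⟨q, hq, rfl⟩
    · have hnC' : s(p.1, p.2) ∉ C' := fun h => hps (hkey1 p hpw h)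
      exact (hflip.2 p.1 p.2 hnC').mpr (hAwO p hpw)
    · have hC'm : s(q.2, q.1) ∈ C' := by
        rw [Sym2.eq_swap]
        exact hAw'C q hq
      exact (hflip.1 q.2 q.1 hC'm).mpr (hAw'O q hq)
  have hwnd : w.darts.Nodup := hw.isTrail.edges_nodup.of_map _
  have hw'nd : w'.darts.Nodup := hw'.isTrail.edges_nodup.of_map _
  have hdisj : Disjoint Aw (Prod.swap '' Aw') := by
    rw [Set.disjoint_left]
    rintro p hpw ⟨q, hq, rfl⟩
    exact O.dir_asymm (hAw'O q hq) (hAwO _ hpw)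
  have hbU : Bal U := bal_union hdisj (warcs_bal w hwnd) (bal_swap (warcs_bal w' hw'nd))
  have hR : Bal (U ∩ Prod.swap '' U) := by
    intro x
    have hsame : {b | (x, b) ∈ U ∩ Prod.swap '' U} = {a | (a, x) ∈ U ∩ Prod.swap '' U} := by
      ext b
      simp only [Set.mem_setOf_eq, Set.mem_inter_iff, hswapU]
      constructor
      · rintro ⟨h1, h2⟩; exact ⟨by simpa using h2, by simpa using h1⟩
      · rintro ⟨h1, h2⟩; exact ⟨by simpa using h2, by simpa using h1⟩
    rw [hsame]
  have hAR : A = U \ (U ∩ Prod.swap '' U) := by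
    rw [hAdef]; ext p; simp only [Set.mem_diff, Set.mem_inter_iff]; tauto
  have hbA : Bal A := by rw [hAR]; exact bal_diff Set.inter_subset_left hbU hR
  have hAE : {e | ∃ p ∈ A, e = s(p.1, p.2)} = symmDiff C C' := by
    ext e
    simp only [Set.mem_setOf_eq, Set.mem_symmDiff]
    constructor
    · rintro ⟨p, ⟨hpU, hps⟩, rfl⟩
      rcases hpU with hpw | ⟨q, hq, rfl⟩
      · exact Or.inl ⟨hAwC p hpw, fun h => hps (hkey1 p hpw h)⟩
      · refine Or.inr ⟨?_, ?_⟩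
        · rw [Sym2.eq_swap]
          exact hAw'C q hq
        · intro h
          exact hps (hkey2 q hq (by rwa [Sym2.eq_swap] at h))
    · rintro (⟨heC, heC'⟩ | ⟨heC', heC⟩)
      · obtain ⟨p, hp, rfl⟩ := hCarc e heC
        refine ⟨p, ⟨Or.inl hp, ?_⟩, rfl⟩
        rw [hswapU]
        rintro (hsw | ⟨q, hq, hqe⟩)
        · exact O.dir_asymm (hAwO p hp) (hAwO p.swap hsw)
        · have hqp : q = p := by have := congrArg Prod.swap hqe; simpa using this
          subst hqp
          exact heC' (hAw'C q hq)
      · obtain ⟨p, hp, rfl⟩ := hC'arc e heC'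
        refine ⟨p.swap, ⟨Or.inr ⟨p, hp, rfl⟩, ?_⟩, Sym2.eq_swap⟩
        rw [hswapU]
        simp only [Prod.swap_swap]
        rintro (hpw | ⟨q, hq, hqe⟩)
        · exact heC (hAwC p hpw)
        · have hqd := hAw'O q hq
          rw [show q = p.swap from by have := congrArg Prod.swap hqe; simpa using this] at hqd
          exact O.dir_asymm (hAw'O p hp) hqd
  obtain ⟨𝒞, hdc, hun⟩ := decomp O' A.ncard A le_rfl hdirA hbA
  rw [hAE] at hun
  refine ⟨⟨𝒞, hdc, hun⟩, ?_⟩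
  intro e he
  by_cases heC' : e ∈ C'
  · have hdir2 : ∀ p ∈ Prod.swap '' Aw', O'.dir p.1 p.2 := by
      rintro p ⟨q, hq, rfl⟩
      refine (hflip.1 q.2 q.1 ?_).mpr (hAw'O q hq)
      rw [Sym2.eq_swap]
      exact hAw'C q hq
    have hbal2 : Bal (Prod.swap '' Aw') := bal_swap (warcs_bal w' hw'nd)
    obtain ⟨𝒞2, hdc2, hun2⟩ := decomp O' _ (Prod.swap '' Aw') le_rfl hdir2 hbal2
    have hE2 : {e | ∃ p ∈ Prod.swap '' Aw', e = s(p.1, p.2)} = C' := by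
      ext e'
      simp only [Set.mem_setOf_eq]
      constructor
      · rintro ⟨p, ⟨q, hq, rfl⟩, rfl⟩
        rw [Sym2.eq_swap]
        exact hAw'C q hq
      · intro he'
        obtain ⟨p, hp, rfl⟩ := hC'arc e' he'
        exact ⟨p.swap, ⟨p, hp, rfl⟩, Sym2.eq_swap⟩
    rw [hE2] at hun2
    have hmem : e ∈ ⋃₀ 𝒞2 := by rw [hun2]; exact heC'
    obtain ⟨D, hD, heD⟩ := hmem
    refine ⟨D, hdc2 D hD, heD, ?_⟩
    intro x hx
    right
    rw [← hun2]
    exact Set.subset_sUnion_of_mem hD hx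
  · have hesd : e ∈ symmDiff C C' := Set.mem_symmDiff.mpr (Or.inl ⟨he, heC'⟩)
    rw [← hun] at hesd
    obtain ⟨D, hD, heD⟩ := hesd
    refine ⟨D, hdc D hD, heD, ?_⟩
    intro x hx
    have hx2 : x ∈ symmDiff C C' := by
      rw [← hun]
      exact Set.subset_sUnion_of_mem hD hx
    rcases Set.mem_symmDiff.mp hx2 with ⟨h1, _⟩ | ⟨h1, _⟩
    · exact Or.inl h1
    · exact Or.inr h1
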